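/- Let n ∈ ℕ, g : Fin n → ℝ and W : ℝ, and suppose the knapsack feasible set K := {c : Fin n → Bool | Σ_{i with c i = true} g i ≤ W} is nonempty. Then there exists a binary decision tree t over n real-valued features with Boolean labels such that (i) for every c : Fin n → Bool, eval t (ι c) = true if and only if c ∈ K, and (ii) the minimum, over all c : Fin n → Bool with eval t (ι c) = true, of the number of coordinates where ι c differs from the all-ones vector (its L0 distance to ι of the all-true selection) equals n minus the maximum of #{i : c i = true} over c ∈ K. Hence solving the minimal-L0 search problem on t solves the 0-1 knapsack instance. -/

import Mathlib

/-- A binary decision tree over `n` real-valued features with labels in `Y`. -/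
inductive DTree (n : ℕ) (Y : Type) where
  | leaf (y : Y) : DTree n Y
  | node (f : Fin n) (b : ℝ) (L R : DTree n Y) : DTree n Y

namespace DTree

/-- Evaluation of a decision tree on an input. -/
noncomputable def eval {n : ℕ} {Y : Type} : DTree n Y → (Fin n → ℝ) → Y
  | .leaf y, _ => y
  | .node f b L R, x => if x f ≤ b then eval L x else eval R x

end DTree

/-- The 0/1 embedding of a Boolean vector into real-valued inputs. -/
def boolEmbed {n : ℕ} (c : Fin n → Bool) : Fin n → ℝ :=
  fun i => if c i then 1 else 0

open Classical in
/-- L0 (Hamming) distance between two real-valued inputs: the number of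
coordinates in which they differ. -/
noncomputable def l0dist {n : ℕ} (x z : Fin n → ℝ) : ℕ :=
  (Finset.univ.filter (fun i => x i ≠ z i)).card

open Classical in
/-- Feasibility for the 0-1 knapsack instance with weights `g` and capacity `W`. -/
def knapFeasible {n : ℕ} (g : Fin n → ℝ) (W : ℝ) (c : Fin n → Bool) : Prop :=
  ∑ i ∈ Finset.univ.filter (fun i => c i = true), g i ≤ W

/-- Value of a 0-1 selection (unit values): number of chosen items. -/
def knapValue {n : ℕ} (c : Fin n → Bool) : ℕ :=
  (Finset.univ.filter (fun i => c i = true)).card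

noncomputable def feasB {n : ℕ} (g : Fin n → ℝ) (W : ℝ) (c : Fin n → Bool) : Bool :=
  @decide (knapFeasible g W c) (Classical.propDecidable _)

lemma feasB_iff {n : ℕ} (g : Fin n → ℝ) (W : ℝ) (c : Fin n → Bool) :
    feasB g W c = true ↔ knapFeasible g W c := by
  unfold feasB; exact @decide_eq_true_iff _ (Classical.propDecidable _)

noncomputable def buildT {n : ℕ} (g : Fin n → ℝ) (W : ℝ) :
    (k : ℕ) → k ≤ n → (Fin n → Bool) → DTree n Bool
  | 0, _, acc => .leaf (feasB g W acc)
  | k+1, h, acc =>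
    let i : Fin n := ⟨n - (k+1), by omega⟩
    .node i (1/2) (buildT g W k (by omega) (Function.update acc i false))
      (buildT g W k (by omega) (Function.update acc i true))

lemma boolEmbed_le_half {n : ℕ} (c : Fin n → Bool) (i : Fin n) :
    boolEmbed c i ≤ 1/2 ↔ c i = false := by
  unfold boolEmbed; cases h : c i <;> simp <;> norm_num

lemma buildT_eval {n : ℕ} (g : Fin n → ℝ) (W : ℝ) :
    ∀ (k : ℕ) (h : k ≤ n) (acc c : Fin n → Bool),
    (∀ i : Fin n, (i : ℕ) < n - k → acc i = c i) →
    (buildT g W k h acc).eval (boolEmbed c) = feasB g W c := by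
  intro k
  induction k with
  | zero =>
    intro h acc c hacc
    have : acc = c := funext fun i => hacc i (by omega)
    simp [buildT, DTree.eval, this]
  | succ k ih =>
    intro h acc c hacc
    set i : Fin n := ⟨n - (k+1), by omega⟩ with hi
    have key : ∀ b : Bool, c i = b →
        (∀ j : Fin n, (j : ℕ) < n - k → Function.update acc i b j = c j) := by
      intro b hb j hj
      by_cases hji : j = i
      · subst hji; simp [hb]
      · rw [Function.update_of_ne hji]
        apply hacc
        have : (j : ℕ) ≠ (i : ℕ) := fun hc => hji (Fin.ext hc)
        simp only [hi] at this ⊢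
        omega
    cases hb : c i with
    | false =>
      have : boolEmbed c i ≤ 1/2 := (boolEmbed_le_half c i).2 hb
      simp only [buildT, DTree.eval, this, if_pos]
      exact (if_pos this).trans (ih (by omega) _ c (key false hb))
    | true =>
      have h2 : ¬ boolEmbed c i ≤ 1/2 := by
        rw [boolEmbed_le_half]; simp [hb]
      simp only [buildT, DTree.eval, h2, if_neg, if_false]
      exact (if_neg h2).trans (ih (by omega) _ c (key true hb))

lemma l0dist_ones {n : ℕ} (c : Fin n → Bool) :
    l0dist (boolEmbed c) (boolEmbed (fun _ => true)) = n - knapValue c := by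
  classical
  unfold l0dist knapValue boolEmbed
  have : ∀ i : Fin n, ((if c i then (1:ℝ) else 0) ≠ if True then 1 else 0) ↔ ¬ (c i = true) := by
    intro i; cases h : c i <;> simp <;> norm_num
  rw [show (Finset.univ.filter fun i => (if c i then (1:ℝ) else 0) ≠ if (fun _ : Fin n => true) i then 1 else 0) = Finset.univ.filter (fun i => ¬ (c i = true)) from Finset.filter_congr (fun i _ => by simpa using this i)]
  rw [Finset.filter_not, Finset.card_sdiff_of_subset (Finset.filter_subset _ _)]
  simp

theorem stmt8 {n : ℕ} (g : Fin n → ℝ) (W : ℝ)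
    (hne : ∃ c : Fin n → Bool, knapFeasible g W c) :
    ∃ t : DTree n Bool,
      (∀ c : Fin n → Bool, t.eval (boolEmbed c) = true ↔ knapFeasible g W c) ∧
      sInf ((fun c : Fin n → Bool => l0dist (boolEmbed c) (boolEmbed (fun _ => true))) ''
          {c : Fin n → Bool | t.eval (boolEmbed c) = true}) =
        n - sSup (knapValue '' {c : Fin n → Bool | knapFeasible g W c}) := by
  classical
  refine ⟨buildT g W n le_rfl (fun _ => false), ?_, ?_⟩
  · intro c
    rw [buildT_eval g W n le_rfl _ c (fun i hi => by omega)]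
    exact feasB_iff g W c
  · have heval : ∀ c : Fin n → Bool,
        (buildT g W n le_rfl (fun _ => false)).eval (boolEmbed c) = true ↔ knapFeasible g W c := by
      intro c
      rw [buildT_eval g W n le_rfl _ c (fun i hi => by omega)]
      exact feasB_iff g W c
    set V : Set ℕ := knapValue '' {c : Fin n → Bool | knapFeasible g W c} with hV
    obtain ⟨c0, hc0⟩ := hne
    have hVne : V.Nonempty := ⟨knapValue c0, c0, hc0, rfl⟩
    have hVbdd : BddAbove V := by
      refine ⟨n, fun v hv => ?_⟩
      obtain ⟨c, _, rfl⟩ := hv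
      exact (Finset.card_filter_le _ _).trans (by simp)
    have hM : sSup V ∈ V := Nat.sSup_mem hVne hVbdd
    obtain ⟨cM, hcM, hMval⟩ := hM
    apply le_antisymm
    · apply Nat.sInf_le
      refine ⟨cM, (heval cM).2 hcM, ?_⟩
      show l0dist (boolEmbed cM) (boolEmbed fun _ => true) = n - sSup V
      rw [l0dist_ones, hMval]
    · apply le_csInf
      · exact ⟨_, ⟨cM, (heval cM).2 hcM, rfl⟩⟩
      · rintro a ⟨c, hc, rfl⟩
        rw [Set.mem_setOf_eq, heval] at hc
        show n - sSup V ≤ l0dist (boolEmbed c) (boolEmbed fun _ => true)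
        rw [l0dist_ones]
        have : knapValue c ≤ sSup V := le_csSup hVbdd ⟨c, hc, rfl⟩
        omega
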